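/- Define θ on the configuration space {(z, z') ∈ ℝ² × ℝ² | z ≠ z'} with values in ZMod 4 by: θ(z,z') = 0 if z and z' have equal second coordinates and the first coordinate of z' is greater than that of z; θ(z,z') = 1 if the second coordinate of z' is greater than that of z; θ(z,z') = 2 if z and z' have equal second coordinates and the first coordinate of z' is less than that of z; θ(z,z') = 3 if the second coordinate of z' is less than that of z. Then θ is continuous, where the configuration space carries the subspace topology of ℝ² × ℝ² and ZMod 4 carries the quotient topology coinduced from the Khalimsky topology on ℤ. -/
import Mathlib


/-- The Khalimsky (digital) topology on `ℤ`: generated by the singletons of odd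
integers together with the triplets `{n-1, n, n+1}` around even integers. -/
def khalimsky : TopologicalSpace ℤ :=
  TopologicalSpace.generateFrom
    ({S | ∃ n : ℤ, Odd n ∧ S = {n}} ∪ {S | ∃ n : ℤ, Even n ∧ S = {n - 1, n, n + 1}})

/-- The quotient topology on `ZMod 4` coinduced from the Khalimsky topology on `ℤ`
by the reduction map `n ↦ (n : ZMod 4)`. -/
def khalimskyMod4 : TopologicalSpace (ZMod 4) :=
  TopologicalSpace.coinduced (fun n : ℤ => (n : ZMod 4)) khalimsky

/-- The topological angle function of the horizontal foliation of the plane is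
continuous from the configuration space `{(z,z') | z ≠ z'}` (subspace topology)
to `ZMod 4` with the quotient Khalimsky topology. -/
lemma khal_key {U : Set ℤ}
    (h : TopologicalSpace.GenerateOpen
      ({S | ∃ n : ℤ, Odd n ∧ S = {n}} ∪ {S | ∃ n : ℤ, Even n ∧ S = {n - 1, n, n + 1}}) U) :
    ∀ n : ℤ, Even n → n ∈ U → (n - 1 ∈ U ∧ n + 1 ∈ U) := by
  induction h with
  | basic s hs =>
    intro n hn hnU
    rcases hs with ⟨m, hm, rfl⟩ | ⟨m, hm, rfl⟩
    · simp only [Set.mem_singleton_iff] at hnU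
      subst hnU
      exact absurd hm (Int.not_odd_iff_even.mpr hn)
    · rw [Int.even_iff] at hn hm
      simp only [Set.mem_insert_iff, Set.mem_singleton_iff] at hnU ⊢
      omega
  | univ => simp
  | inter s t _ _ ihs iht =>
    intro n hn h
    exact ⟨⟨(ihs n hn h.1).1, (iht n hn h.2).1⟩, ⟨(ihs n hn h.1).2, (iht n hn h.2).2⟩⟩
  | sUnion S _ ih =>
    intro n hn h
    rcases h with ⟨s, hsS, hns⟩
    obtain ⟨h1, h2⟩ := ih s hsS n hn hns
    exact ⟨⟨s, hsS, h1⟩, ⟨s, hsS, h2⟩⟩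

theorem theta_continuous
    (θ : {p : (ℝ × ℝ) × (ℝ × ℝ) // p.1 ≠ p.2} → ZMod 4)
    (h0 : ∀ p, p.val.2.2 = p.val.1.2 → p.val.1.1 < p.val.2.1 → θ p = 0)
    (h1 : ∀ p, p.val.1.2 < p.val.2.2 → θ p = 1)
    (h2 : ∀ p, p.val.2.2 = p.val.1.2 → p.val.2.1 < p.val.1.1 → θ p = 2)
    (h3 : ∀ p, p.val.2.2 < p.val.1.2 → θ p = 3) :
    @Continuous {p : (ℝ × ℝ) × (ℝ × ℝ) // p.1 ≠ p.2} (ZMod 4) _ khalimskyMod4 θ := by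
  -- continuous coordinate functions
  have ca : Continuous fun p : {p : (ℝ × ℝ) × (ℝ × ℝ) // p.1 ≠ p.2} => p.val.1.1 := by fun_prop
  have cb : Continuous fun p : {p : (ℝ × ℝ) × (ℝ × ℝ) // p.1 ≠ p.2} => p.val.1.2 := by fun_prop
  have cc : Continuous fun p : {p : (ℝ × ℝ) × (ℝ × ℝ) // p.1 ≠ p.2} => p.val.2.1 := by fun_prop
  have cd : Continuous fun p : {p : (ℝ × ℝ) × (ℝ × ℝ) // p.1 ≠ p.2} => p.val.2.2 := by fun_prop
  -- case analysis on p telling which theta value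
  have cases' : ∀ p : {p : (ℝ × ℝ) × (ℝ × ℝ) // p.1 ≠ p.2},
      (p.val.2.2 = p.val.1.2 ∧ p.val.1.1 < p.val.2.1) ∨ (p.val.1.2 < p.val.2.2) ∨
      (p.val.2.2 = p.val.1.2 ∧ p.val.2.1 < p.val.1.1) ∨ (p.val.2.2 < p.val.1.2) := by
    intro p
    rcases lt_trichotomy p.val.1.2 p.val.2.2 with h | h | h
    · exact Or.inr (Or.inl h)
    · rcases lt_trichotomy p.val.1.1 p.val.2.1 with hx | hx | hx
      · exact Or.inl ⟨h.symm, hx⟩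
      · exact absurd (Prod.ext hx h) p.2
      · exact Or.inr (Or.inr (Or.inl ⟨h.symm, hx⟩))
    · exact Or.inr (Or.inr (Or.inr h))
  rw [continuous_def]
  intro U hU
  have hZ : khalimsky.IsOpen ((fun n : ℤ => (n : ZMod 4)) ⁻¹' U) := hU
  have key := khal_key hZ
  -- membership facts
  have mem0 : (0 : ZMod 4) ∈ U → (1 : ZMod 4) ∈ U ∧ (3 : ZMod 4) ∈ U := by
    intro h
    have h0' : (0 : ℤ) ∈ ((fun n : ℤ => (n : ZMod 4)) ⁻¹' U) := by simpa using h
    obtain ⟨ha, hb⟩ := key 0 Even.zero h0'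
    constructor
    · simpa using hb
    · have : (((0 : ℤ) - 1 : ℤ) : ZMod 4) = 3 := by decide
      rw [Set.mem_preimage, this] at ha; exact ha
  have mem2 : (2 : ZMod 4) ∈ U → (1 : ZMod 4) ∈ U ∧ (3 : ZMod 4) ∈ U := by
    intro h
    have h2' : (2 : ℤ) ∈ ((fun n : ℤ => (n : ZMod 4)) ⁻¹' U) := by
      rw [Set.mem_preimage]; exact (by push_cast; exact h)
    obtain ⟨ha, hb⟩ := key 2 even_two h2'
    constructor
    · have : (((2 : ℤ) - 1 : ℤ) : ZMod 4) = 1 := by decide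
      rw [Set.mem_preimage, this] at ha; exact ha
    · have : (((2 : ℤ) + 1 : ℤ) : ZMod 4) = 3 := by decide
      rw [Set.mem_preimage, this] at hb; exact hb
  by_cases hu0 : (0 : ZMod 4) ∈ U
  · by_cases hu2 : (2 : ZMod 4) ∈ U
    · -- U = univ
      have : θ ⁻¹' U = Set.univ := by
        ext p
        simp only [Set.mem_preimage, Set.mem_univ, iff_true]
        rcases cases' p with ⟨he, hx⟩ | hy | ⟨he, hx⟩ | hy
        · rw [h0 p he hx]; exact hu0
        · rw [h1 p hy]; exact (mem0 hu0).1
        · rw [h2 p he hx]; exact hu2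
        · rw [h3 p hy]; exact (mem0 hu0).2
      rw [this]; exact isOpen_univ
    · -- U = {0,1,3}: preimage = ne ∨ lt
      obtain ⟨hu1, hu3⟩ := mem0 hu0
      have : θ ⁻¹' U = {p : {p : (ℝ × ℝ) × (ℝ × ℝ) // p.1 ≠ p.2} |
          p.val.2.2 ≠ p.val.1.2 ∨ p.val.1.1 < p.val.2.1} := by
        ext p
        simp only [Set.mem_preimage, Set.mem_setOf_eq]
        constructor
        · intro hp
          by_contra hc
          push_neg at hc
          obtain ⟨he, hx⟩ := hc
          rcases cases' p with ⟨_, hx'⟩ | hy | ⟨he', hx'⟩ | hy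
          · exact absurd hx' (not_lt.mpr hx)
          · exact absurd hy (by rw [he]; exact lt_irrefl _)
          · rw [h2 p he' hx'] at hp; exact hu2 hp
          · exact absurd hy (by rw [he]; exact lt_irrefl _)
        · intro hp
          rcases cases' p with ⟨he, hx⟩ | hy | ⟨he, hx⟩ | hy
          · rw [h0 p he hx]; exact hu0
          · rw [h1 p hy]; exact hu1
          · rcases hp with hne | hlt
            · exact absurd he hne
            · exact absurd hlt (not_lt.mpr hx.le)
          · rw [h3 p hy]; exact hu3
      rw [this]
      exact (isOpen_ne_fun cd cb).union (isOpen_lt ca cc)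
  · by_cases hu2 : (2 : ZMod 4) ∈ U
    · -- U = {1,2,3}: preimage = ne ∨ gt
      obtain ⟨hu1, hu3⟩ := mem2 hu2
      have : θ ⁻¹' U = {p : {p : (ℝ × ℝ) × (ℝ × ℝ) // p.1 ≠ p.2} |
          p.val.2.2 ≠ p.val.1.2 ∨ p.val.2.1 < p.val.1.1} := by
        ext p
        simp only [Set.mem_preimage, Set.mem_setOf_eq]
        constructor
        · intro hp
          by_contra hc
          push_neg at hc
          obtain ⟨he, hx⟩ := hc
          rcases cases' p with ⟨he', hx'⟩ | hy | ⟨_, hx'⟩ | hy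
          · rw [h0 p he' hx'] at hp; exact hu0 hp
          · exact absurd hy (by rw [he]; exact lt_irrefl _)
          · exact absurd hx' (not_lt.mpr hx)
          · exact absurd hy (by rw [he]; exact lt_irrefl _)
        · intro hp
          rcases cases' p with ⟨he, hx⟩ | hy | ⟨he, hx⟩ | hy
          · rcases hp with hne | hlt
            · exact absurd he hne
            · exact absurd hlt (not_lt.mpr hx.le)
          · rw [h1 p hy]; exact hu1
          · rw [h2 p he hx]; exact hu2
          · rw [h3 p hy]; exact hu3
      rw [this]
      exact (isOpen_ne_fun cd cb).union (isOpen_lt cc ca)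
    · -- U ⊆ {1,3}
      by_cases hu1 : (1 : ZMod 4) ∈ U
      · by_cases hu3 : (3 : ZMod 4) ∈ U
        · have : θ ⁻¹' U = {p : {p : (ℝ × ℝ) × (ℝ × ℝ) // p.1 ≠ p.2} |
              p.val.1.2 < p.val.2.2 ∨ p.val.2.2 < p.val.1.2} := by
            ext p
            simp only [Set.mem_preimage, Set.mem_setOf_eq]
            constructor
            · intro hp
              rcases cases' p with ⟨he, hx⟩ | hy | ⟨he, hx⟩ | hy
              · rw [h0 p he hx] at hp; exact absurd hp hu0
              · exact Or.inl hy
              · rw [h2 p he hx] at hp; exact absurd hp hu2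
              · exact Or.inr hy
            · intro hp
              rcases hp with hy | hy
              · rw [h1 p hy]; exact hu1
              · rw [h3 p hy]; exact hu3
          rw [this]
          exact (isOpen_lt cb cd).union (isOpen_lt cd cb)
        · have : θ ⁻¹' U = {p : {p : (ℝ × ℝ) × (ℝ × ℝ) // p.1 ≠ p.2} |
              p.val.1.2 < p.val.2.2} := by
            ext p
            simp only [Set.mem_preimage, Set.mem_setOf_eq]
            constructor
            · intro hp
              rcases cases' p with ⟨he, hx⟩ | hy | ⟨he, hx⟩ | hy
              · rw [h0 p he hx] at hp; exact absurd hp hu0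
              · exact hy
              · rw [h2 p he hx] at hp; exact absurd hp hu2
              · rw [h3 p hy] at hp; exact absurd hp hu3
            · intro hy
              rw [h1 p hy]; exact hu1
          rw [this]
          exact isOpen_lt cb cd
      · by_cases hu3 : (3 : ZMod 4) ∈ U
        · have : θ ⁻¹' U = {p : {p : (ℝ × ℝ) × (ℝ × ℝ) // p.1 ≠ p.2} |
              p.val.2.2 < p.val.1.2} := by
            ext p
            simp only [Set.mem_preimage, Set.mem_setOf_eq]
            constructor
            · intro hp
              rcases cases' p with ⟨he, hx⟩ | hy | ⟨he, hx⟩ | hy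
              · rw [h0 p he hx] at hp; exact absurd hp hu0
              · rw [h1 p hy] at hp; exact absurd hp hu1
              · rw [h2 p he hx] at hp; exact absurd hp hu2
              · exact hy
            · intro hy
              rw [h3 p hy]; exact hu3
          rw [this]
          exact isOpen_lt cd cb
        · have : θ ⁻¹' U = ∅ := by
            ext p
            simp only [Set.mem_preimage, Set.mem_empty_iff_false, iff_false]
            intro hp
            rcases cases' p with ⟨he, hx⟩ | hy | ⟨he, hx⟩ | hy
            · rw [h0 p he hx] at hp; exact hu0 hp
            · rw [h1 p hy] at hp; exact hu1 hp
            · rw [h2 p he hx] at hp; exact hu2 hp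
            · rw [h3 p hy] at hp; exact hu3 hp
          rw [this]
          exact isOpen_empty
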